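/- For all m ≥ 1 and all n ≥ k ≥ 1, the higher order Stirling numbers satisfy S^(m)(n,k) = Σ_{s=k−1}^{n−1} C(n−1, s) · B_{n−s}^(m−1) · S^(m)(s, k−1), where by convention S^(m)(0,0) = 1 and B_j^(0) = 1 for j ≥ 1, and C(n−1,s) is a binomial coefficient. -/

import Mathlib

/-- `m`-th order ("hyper") partitions of a finite set `s`:
a chain `(P₁, …, P_m)` where `P₁` is a partition of `s` and each `P_{j+1}`
is a partition of the set of blocks of `P_j`. For `m = 0` it is `s` itself
(a single trivial object). -/
def HyperPartition : (m : ℕ) → {α : Type} → [DecidableEq α] → Finset α → Type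
  | 0, _, _, _ => PUnit
  | m + 1, _, _, s => (P : Finpartition s) × HyperPartition m P.parts

/-- The number of blocks of the outermost partition of a hyper partition
(for `m = 0`, by convention, the cardinality of the underlying set). -/
def HyperPartition.outerBlocks :
    (m : ℕ) → {α : Type} → [DecidableEq α] → {s : Finset α} →
      HyperPartition m s → ℕ
  | 0, _, _, s, _ => s.card
  | 1, _, _, _, p => p.1.parts.card
  | m + 2, _, _, _, p => HyperPartition.outerBlocks (m + 1) p.2

/-- `|℘ₙ^(m)|`: the number of `m`-th order partitions of an `n`-element set. -/
noncomputable def hyperBell (m n : ℕ) : ℕ :=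
  Nat.card (HyperPartition m (Finset.univ : Finset (Fin n)))

/-- The `m`-th order Stirling number `S^(m)(n,k)`: the number of `m`-th order
partitions of an `n`-element set whose outermost partition has exactly `k` blocks. -/
noncomputable def hyperStirling (m n k : ℕ) : ℕ :=
  Nat.card {p : HyperPartition m (Finset.univ : Finset (Fin n)) //
    HyperPartition.outerBlocks m p = k}

/-- The ordinary Stirling number of the second kind `S(n,k)`: the number of
set partitions of an `n`-element set into exactly `k` blocks. -/
noncomputable def stirling (n k : ℕ) : ℕ :=
  Nat.card {P : Finpartition (Finset.univ : Finset (Fin n)) // P.parts.card = k}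

/-- Composition `f(g(x))` of formal power series (intended for `g` with zero
constant term, in which case `coeff n (g ^ i) = 0` for `i > n`). -/
noncomputable def psComp (f g : PowerSeries ℚ) : PowerSeries ℚ :=
  PowerSeries.mk fun n =>
    PowerSeries.coeff (R := ℚ) n
      (∑ i ∈ Finset.range (n + 1), PowerSeries.C (R := ℚ) (PowerSeries.coeff (R := ℚ) i f) * g ^ i)

/-- The iterated exponential series: `E₀ = exp x`, `E_{m+1} = exp (E_m - 1)`. -/
noncomputable def E : ℕ → PowerSeries ℚ
  | 0 => PowerSeries.exp ℚ
  | m + 1 => psComp (PowerSeries.exp ℚ) (E m - 1)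

/-- The `m`-th order Bell number `Bₙ^(m) = n! · [xⁿ] E_m(x)`. -/
noncomputable def bell (m n : ℕ) : ℚ :=
  (n.factorial : ℚ) * PowerSeries.coeff (R := ℚ) n (E m)


open Finset

variable {α β : Type} [DecidableEq α] [DecidableEq β]

lemma sup_map_comm (f : α ↪ β) (t : Finset (Finset α)) :
    (t.sup id).map f = t.sup (fun b => b.map f) := by
  ext x
  simp only [Finset.mem_map, Finset.mem_sup, id]
  constructor
  · rintro ⟨a, ⟨c, hc, hac⟩, rfl⟩; exact ⟨c, hc, a, hac, rfl⟩
  · rintro ⟨c, hc, a, ha, rfl⟩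
    exact ⟨a, ⟨c, hc, ha⟩, rfl⟩

/-- Map a finpartition along an embedding of ambient types. -/
noncomputable def Finpartition.mapEmb (f : α ↪ β) {s : Finset α} (P : Finpartition s) :
    Finpartition (s.map f) where
  parts := P.parts.map (Finset.mapEmbedding f).toEmbedding
  supIndep := by
    rw [Finset.supIndep_iff_pairwiseDisjoint]
    rintro x hx y hy hxy
    simp only [Finset.coe_map, Set.mem_image, Finset.mem_coe] at hx hy
    rcases hx with ⟨b, hb, rfl⟩
    rcases hy with ⟨c, hc, rfl⟩
    have hbc : b ≠ c := by rintro rfl; exact hxy rfl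
    have h2 := P.supIndep.pairwiseDisjoint hb hc hbc
    show Disjoint (id (b.map f)) (id (c.map f))
    simp only [id]
    rw [Finset.disjoint_map]
    exact h2
  sup_parts := by
    rw [Finset.sup_map]
    have h : (id ∘ (Finset.mapEmbedding f).toEmbedding : Finset α → Finset β)
        = fun b => b.map f := by
      funext b; rfl
    rw [h, ← sup_map_comm, P.sup_parts]
  bot_notMem := by
    simp only [bot_eq_empty, Finset.mem_map, RelEmbedding.coe_toEmbedding,
      Finset.mapEmbedding_apply]
    rintro ⟨b, hb, hbe⟩
    rw [Finset.map_eq_empty] at hbe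
    subst hbe
    exact P.bot_notMem hb

lemma Finpartition.mapEmb_parts (f : α ↪ β) {s : Finset α} (P : Finpartition s) :
    (P.mapEmb f).parts = P.parts.map (Finset.mapEmbedding f).toEmbedding := rfl

/-- Pull back a finpartition along an embedding of ambient types. -/
noncomputable def Finpartition.unmapEmb (f : α ↪ β) {s : Finset α} (Q : Finpartition (s.map f)) :
    Finpartition s where
  parts := Q.parts.image (fun b => b.preimage f f.injective.injOn)
  supIndep := by
    rw [Finset.supIndep_iff_pairwiseDisjoint]
    rintro x hx y hy hxy
    simp only [Finset.coe_image, Set.mem_image, Finset.mem_coe] at hx hy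
    rcases hx with ⟨b, hb, rfl⟩
    rcases hy with ⟨c, hc, rfl⟩
    have hbc : b ≠ c := by rintro rfl; exact hxy rfl
    have hd := Q.disjoint hb hc hbc
    simp only [id, Function.onFun, Finset.disjoint_left] at hd ⊢
    intro a ha ha'
    rw [Finset.mem_preimage] at ha ha'
    exact hd ha ha'
  sup_parts := by
    ext a
    simp only [Finset.mem_sup, Finset.mem_image, id]
    constructor
    · rintro ⟨x, ⟨b, hb, rfl⟩, ha⟩
      rw [Finset.mem_preimage] at ha
      have : f a ∈ s.map f := by rw [← Q.sup_parts]; exact Finset.mem_sup.2 ⟨b, hb, ha⟩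
      exact (Finset.mem_map' f).1 this
    · intro ha
      have : f a ∈ s.map f := (Finset.mem_map' f).2 ha
      rw [← Q.sup_parts] at this
      rcases Finset.mem_sup.1 this with ⟨b, hb, hfb⟩
      exact ⟨b.preimage f f.injective.injOn, ⟨b, hb, rfl⟩, Finset.mem_preimage.2 hfb⟩
  bot_notMem := by
    simp only [bot_eq_empty, Finset.mem_image]
    rintro ⟨b, hb, hbe⟩
    rcases Q.nonempty_of_mem_parts hb with ⟨x, hx⟩
    have hxs : x ∈ s.map f := (Q.le hb) hx
    rcases Finset.mem_map.1 hxs with ⟨a, _, rfl⟩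
    have : a ∈ b.preimage f f.injective.injOn := Finset.mem_preimage.2 hx
    rw [hbe] at this
    exact absurd this (Finset.notMem_empty a)

lemma Finpartition.unmapEmb_mapEmb (f : α ↪ β) {s : Finset α} (P : Finpartition s) :
    (P.mapEmb f).unmapEmb f = P := by
  ext1
  show (P.parts.map (Finset.mapEmbedding f).toEmbedding).image _ = P.parts
  rw [Finset.map_eq_image, Finset.image_image]
  have h : ∀ b ∈ P.parts,
      ((fun b => Finset.preimage b f f.injective.injOn) ∘ (Finset.mapEmbedding f).toEmbedding) b
        = id b := by
    intro b _
    ext a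
    simp only [Function.comp_apply, RelEmbedding.coe_toEmbedding, Finset.mapEmbedding_apply,
      Finset.mem_preimage, Finset.mem_map', id]
  rw [Finset.image_congr h, Finset.image_id]

lemma Finpartition.mapEmb_unmapEmb (f : α ↪ β) {s : Finset α} (Q : Finpartition (s.map f)) :
    (Q.unmapEmb f).mapEmb f = Q := by
  ext1
  show (Q.parts.image _).map (Finset.mapEmbedding f).toEmbedding = Q.parts
  rw [Finset.map_eq_image, Finset.image_image]
  have h : ∀ b ∈ Q.parts,
      ((Finset.mapEmbedding f).toEmbedding ∘ fun b => Finset.preimage b f f.injective.injOn) b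
        = id b := by
    intro b hb
    have hbs : b ⊆ s.map f := Q.le hb
    ext x
    simp only [Function.comp_apply, RelEmbedding.coe_toEmbedding, Finset.mapEmbedding_apply,
      Finset.mem_map, Finset.mem_preimage, id]
    constructor
    · rintro ⟨a, ha, rfl⟩; exact ha
    · intro hx
      rcases Finset.mem_map.1 (hbs hx) with ⟨a, _, rfl⟩
      exact ⟨a, hx, rfl⟩
  rw [Finset.image_congr h, Finset.image_id]

/-- The equivalence of finpartitions along an embedding. -/
noncomputable def Finpartition.mapEmbEquiv (f : α ↪ β) (s : Finset α) :
    Finpartition s ≃ Finpartition (s.map f) where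
  toFun := Finpartition.mapEmb f
  invFun := Finpartition.unmapEmb f
  left_inv := Finpartition.unmapEmb_mapEmb f
  right_inv := Finpartition.mapEmb_unmapEmb f

/-- Disjoint union of finpartitions. -/
def Finpartition.disjUnion' {s t : Finset α} (P : Finpartition s) (Q : Finpartition t)
    (h : Disjoint s t) : Finpartition (s ∪ t) where
  parts := P.parts ∪ Q.parts
  supIndep := by
    rw [Finset.supIndep_iff_pairwiseDisjoint]
    rintro x hx y hy hxy
    simp only [Finset.coe_union, Set.mem_union, Finset.mem_coe] at hx hy
    rcases hx with hx | hx <;> rcases hy with hy | hy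
    · exact P.disjoint hx hy hxy
    · exact (h.mono (P.le hx) (Q.le hy))
    · exact (h.symm.mono (Q.le hx) (P.le hy))
    · exact Q.disjoint hx hy hxy
  sup_parts := by rw [Finset.sup_union, P.sup_parts, Q.sup_parts]; rfl
  bot_notMem := by
    rw [Finset.mem_union]
    rintro (hb | hb)
    · exact P.bot_notMem hb
    · exact Q.bot_notMem hb

lemma Finpartition.disjUnion'_parts {s t : Finset α} (P : Finpartition s) (Q : Finpartition t)
    (h : Disjoint s t) : (P.disjUnion' Q h).parts = P.parts ∪ Q.parts := rfl

/-- Removing a family of parts gives a partition of the complement. -/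
lemma Finpartition.sup_sdiff_parts {s : Finset α} (P : Finpartition s)
    {T : Finset (Finset α)} (hT : T ⊆ P.parts) :
    (P.parts \ T).sup id = s \ (T.sup id) := by
  ext a
  simp only [Finset.mem_sup, Finset.mem_sdiff, id]
  constructor
  · rintro ⟨b, hb, ha⟩
    obtain ⟨hb1, hb2⟩ := hb
    refine ⟨(P.le hb1) ha, ?_⟩
    rintro ⟨c, hc, hac⟩
    exact hb2 ((P.eq_of_mem_parts hb1 (hT hc) ha hac) ▸ hc)
  · rintro ⟨has, hna⟩
    rcases P.exists_mem has with ⟨b, hb, hab⟩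
    exact ⟨b, ⟨hb, fun hbT => hna ⟨b, hbT, hab⟩⟩, hab⟩
section HP

open Finset HyperPartition

variable {α β : Type} [DecidableEq α] [DecidableEq β]

instance hyperPartitionFinite : ∀ (m : ℕ) {α : Type} [DecidableEq α] (s : Finset α),
    Finite (HyperPartition m s)
  | 0, _, _, _ => inferInstanceAs (Finite PUnit.{1})
  | m + 1, α, _, s => by
      haveI : ∀ P : Finpartition s, Finite (HyperPartition m P.parts) :=
        fun P => hyperPartitionFinite m P.parts
      exact inferInstanceAs (Finite ((P : Finpartition s) × HyperPartition m P.parts))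

/-- Transport of hyper partitions along an embedding. -/
noncomputable def hpMap : (m : ℕ) → {α β : Type} → [DecidableEq α] → [DecidableEq β] →
    (f : α ↪ β) → {s : Finset α} → HyperPartition m s → HyperPartition m (s.map f)
  | 0, _, _, _, _, _, _, _ => PUnit.unit
  | m + 1, _, _, _, _, f, _, p =>
      ⟨p.1.mapEmb f, hpMap m (Finset.mapEmbedding f).toEmbedding p.2⟩

theorem hpMap_outer : ∀ (m : ℕ) {α β : Type} [DecidableEq α] [DecidableEq β]
    (f : α ↪ β) {s : Finset α} (p : HyperPartition m s),
    HyperPartition.outerBlocks m (hpMap m f p) = HyperPartition.outerBlocks m p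
  | 0, _, _, _, _, f, s, p => by
      show (s.map f).card = s.card
      exact Finset.card_map f
  | 1, _, _, _, _, f, s, p => by
      show ((p.1.mapEmb f).parts).card = p.1.parts.card
      rw [Finpartition.mapEmb_parts]
      exact Finset.card_map _
  | m + 2, _, _, _, _, f, s, p => by
      show HyperPartition.outerBlocks (m + 1) (hpMap (m+1) (Finset.mapEmbedding f).toEmbedding p.2)
        = HyperPartition.outerBlocks (m + 1) p.2
      exact hpMap_outer (m + 1) _ p.2

theorem hpMap_bijective : ∀ (m : ℕ) {α β : Type} [DecidableEq α] [DecidableEq β]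
    (f : α ↪ β) (s : Finset α),
    Function.Bijective (hpMap m f (s := s))
  | 0, _, _, _, _, f, s =>
      ⟨fun p q _ => rfl, fun q => ⟨PUnit.unit, rfl⟩⟩
  | m + 1, α, β, _, _, f, s => by
      constructor
      · rintro ⟨P, q⟩ ⟨P', q'⟩ h
        obtain ⟨h1, h2⟩ := Sigma.ext_iff.1 h
        have hP : P = P' := by
          have hinj : Function.Injective (Finpartition.mapEmb f (s := s)) :=
            (Finpartition.mapEmbEquiv f s).injective
          exact hinj h1
        subst hP
        have h2' : hpMap m (Finset.mapEmbedding f).toEmbedding q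
            = hpMap m (Finset.mapEmbedding f).toEmbedding q' := eq_of_heq h2
        have hq := (hpMap_bijective m (Finset.mapEmbedding f).toEmbedding P.parts).1 h2'
        rw [hq]
      · rintro ⟨Q, r⟩
        obtain ⟨P, rfl⟩ : ∃ P : Finpartition s, Finpartition.mapEmb f P = Q :=
          ⟨Q.unmapEmb f, Finpartition.mapEmb_unmapEmb f Q⟩
        obtain ⟨q, hq⟩ := (hpMap_bijective m (Finset.mapEmbedding f).toEmbedding P.parts).2 r
        exact ⟨⟨P, q⟩, congrArg (Sigma.mk (Finpartition.mapEmb f P)) hq⟩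

/-- hpMap as an equiv. -/
noncomputable def hpEquiv (m : ℕ) (f : α ↪ β) (s : Finset α) :
    HyperPartition m s ≃ HyperPartition m (s.map f) :=
  Equiv.ofBijective _ (hpMap_bijective m f s)

lemma hpEquiv_outer (m : ℕ) (f : α ↪ β) (s : Finset α) (p : HyperPartition m s) :
    HyperPartition.outerBlocks m (hpEquiv m f s p) = HyperPartition.outerBlocks m p :=
  hpMap_outer m f p

/-- An enumeration embedding realizing a finset as image of `Fin n`. -/
noncomputable def enumEmb (s : Finset α) : Fin s.card ↪ α :=
  (s.equivFin).symm.toEmbedding.trans (Function.Embedding.subtype _)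

lemma enumEmb_map_univ (s : Finset α) : Finset.univ.map (enumEmb s) = s := by
  ext b
  simp only [Finset.mem_map, Finset.mem_univ, true_and]
  constructor
  · rintro ⟨i, rfl⟩
    exact ((s.equivFin).symm i).2
  · intro hb
    obtain ⟨i, hi⟩ := (s.equivFin).symm.surjective ⟨b, hb⟩
    exact ⟨i, by rw [show enumEmb s i = ((s.equivFin).symm i : α) from rfl, hi]⟩

/-- Invariance: the number of hyper partitions with given outer block count
depends only on the cardinality. -/
lemma card_hp_outer (m : ℕ) (s : Finset α) (k : ℕ) :
    Nat.card {p : HyperPartition m s // HyperPartition.outerBlocks m p = k}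
      = hyperStirling m s.card k := by
  rw [hyperStirling]
  have h := enumEmb_map_univ s
  have e2 : {p : HyperPartition m (Finset.univ.map (enumEmb s)) //
        HyperPartition.outerBlocks m p = k}
      ≃ {p : HyperPartition m (Finset.univ : Finset (Fin s.card)) //
        HyperPartition.outerBlocks m p = k} :=
    (Equiv.subtypeEquiv (hpEquiv m (enumEmb s) Finset.univ)
      (fun p => by rw [hpEquiv_outer])).symm
  rw [← Nat.card_congr e2]
  congr 1
  rw [h]

lemma card_hp (m : ℕ) (s : Finset α) :
    Nat.card (HyperPartition m s) = hyperBell m s.card := by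
  rw [hyperBell]
  have h := enumEmb_map_univ s
  have e2 : HyperPartition m (Finset.univ.map (enumEmb s))
      ≃ HyperPartition m (Finset.univ : Finset (Fin s.card)) :=
    (hpEquiv m (enumEmb s) Finset.univ).symm
  rw [← Nat.card_congr e2]
  congr 1
  rw [h]

end HP
section Counting

open Finset HyperPartition

set_option linter.unusedSectionVars false

variable {α β : Type} [DecidableEq α] [DecidableEq β]

lemma nat_card_sigma {ι : Type} [Fintype ι] (f : ι → Type) [∀ i, Finite (f i)] :
    Nat.card ((i : ι) × f i) = ∑ i, Nat.card (f i) := by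
  haveI : ∀ i, Fintype (f i) := fun i => Fintype.ofFinite (f i)
  rw [Nat.card_eq_fintype_card, Fintype.card_sigma]
  exact Finset.sum_congr rfl (fun i _ => (Nat.card_eq_fintype_card).symm)

/-- `HyperPartition 1` is just finpartitions. -/
def hpOneEquiv (s : Finset α) :
    HyperPartition 1 s ≃ Finpartition s where
  toFun p := p.1
  invFun P := ⟨P, PUnit.unit⟩
  left_inv p := rfl
  right_inv P := rfl

lemma hyperStirling_one (n k : ℕ) : hyperStirling 1 n k = stirling n k := by
  rw [hyperStirling, stirling]
  exact Nat.card_congr (Equiv.subtypeEquiv (hpOneEquiv _) (fun p => Iff.rfl))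

lemma card_finpartition (s : Finset α) (k : ℕ) :
    Nat.card {P : Finpartition s // P.parts.card = k} = stirling s.card k := by
  rw [← hyperStirling_one, ← card_hp_outer 1 s k]
  exact Nat.card_congr (Equiv.subtypeEquiv (hpOneEquiv s) (fun p => Iff.rfl)).symm

lemma outer_le : ∀ (m : ℕ) {α : Type} [DecidableEq α] {s : Finset α}
    (p : HyperPartition m s), HyperPartition.outerBlocks m p ≤ s.card
  | 0, _, _, s, p => le_rfl
  | 1, _, _, s, p => p.1.card_parts_le_card
  | m + 2, _, _, s, p =>
      le_trans (outer_le (m + 1) p.2) p.1.card_parts_le_card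

lemma hyperStirling_eq_zero {m n k : ℕ} (h : n < k) : hyperStirling m n k = 0 := by
  rw [hyperStirling, Nat.card_eq_zero]
  left
  constructor
  rintro ⟨p, hp⟩
  have := outer_le m p
  rw [hp, Finset.card_univ, Fintype.card_fin] at this
  omega

lemma stirling_eq_zero {n k : ℕ} (h : n < k) : stirling n k = 0 := by
  rw [← hyperStirling_one]; exact hyperStirling_eq_zero h

/-- everything about hyper partitions of the empty set -/
lemma hp_empty : ∀ (m : ℕ) {α : Type} [DecidableEq α] (s : Finset α), s = ∅ →
    (Nonempty (HyperPartition m s) ∧ Subsingleton (HyperPartition m s)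
       ∧ ∀ p : HyperPartition m s, HyperPartition.outerBlocks m p = 0)
  | 0, _, _, s, hs => by
      refine ⟨⟨PUnit.unit⟩, ⟨fun a b => rfl⟩, fun p => ?_⟩
      show s.card = 0
      simp [hs]
  | m + 1, α, _, s, hs => by
      subst hs
      have hbot : (⊥ : Finset α) = ∅ := rfl
      set P₀ : Finpartition (∅ : Finset α) := (Finpartition.empty (Finset α)).copy hbot
      have hparts : ∀ P : Finpartition (∅ : Finset α), P.parts = ∅ := by
        intro P
        exact Finpartition.parts_eq_empty_iff.2 rfl
      obtain ⟨⟨q₀⟩, _, _⟩ := hp_empty m P₀.parts (hparts P₀)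
      refine ⟨⟨⟨P₀, q₀⟩⟩, ⟨?_⟩, ?_⟩
      · rintro ⟨P, q⟩ ⟨P', q'⟩
        have hPP : P = P' := by
          ext b
          rw [hparts P, hparts P']
        subst hPP
        obtain ⟨_, hss, _⟩ := hp_empty m P.parts (hparts P)
        rw [hss.allEq q q']
      · rintro ⟨P, q⟩
        obtain ⟨_, _, houter⟩ := hp_empty m P.parts (hparts P)
        match m with
        | 0 =>
          show P.parts.card = 0
          rw [hparts P]; rfl
        | m' + 1 =>
          show HyperPartition.outerBlocks (m' + 1) q = 0
          exact houter q

lemma hyperStirling_zero_zero (m : ℕ) : hyperStirling m 0 0 = 1 := by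
  rw [hyperStirling]
  obtain ⟨⟨p⟩, hss, houter⟩ := hp_empty m (Finset.univ : Finset (Fin 0)) rfl
  rw [Nat.card_eq_one_iff_unique]
  exact ⟨⟨fun a b => Subtype.ext (hss.allEq a.1 b.1)⟩, ⟨⟨p, houter p⟩⟩⟩

lemma hyperBell_zero' (m : ℕ) : hyperBell m 0 = 1 := by
  rw [hyperBell]
  obtain ⟨⟨p⟩, hss, _⟩ := hp_empty m (Finset.univ : Finset (Fin 0)) rfl
  rw [Nat.card_eq_one_iff_unique]
  exact ⟨hss, ⟨p⟩⟩

lemma hyperBell_zero (n : ℕ) : hyperBell 0 n = 1 := by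
  rw [hyperBell, Nat.card_eq_one_iff_unique]
  exact ⟨⟨fun a b => rfl⟩, ⟨PUnit.unit⟩⟩

lemma stirling_zero_zero : stirling 0 0 = 1 := by
  rw [← hyperStirling_one]
  rw [hyperStirling]
  obtain ⟨⟨p⟩, hss, houter⟩ := hp_empty 1 (Finset.univ : Finset (Fin 0)) rfl
  rw [Nat.card_eq_one_iff_unique]
  exact ⟨⟨fun a b => Subtype.ext (hss.allEq a.1 b.1)⟩, ⟨⟨p, houter p⟩⟩⟩

lemma stirling_zero {n : ℕ} (hn : 1 ≤ n) : stirling n 0 = 0 := by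
  rw [stirling, Nat.card_eq_zero]
  left
  constructor
  rintro ⟨P, hP⟩
  have : P.parts = ∅ := Finset.card_eq_zero.1 hP
  have h2 : (Finset.univ : Finset (Fin n)) = ∅ := Finpartition.parts_eq_empty_iff.1 this
  have hx : (Finset.univ : Finset (Fin n)).Nonempty := ⟨⟨0, by omega⟩, Finset.mem_univ _⟩
  rw [h2] at hx
  simp at hx

lemma outer_pos : ∀ (m : ℕ) {α : Type} [DecidableEq α] {s : Finset α}, s.Nonempty →
    ∀ p : HyperPartition m s, 1 ≤ HyperPartition.outerBlocks m p
  | 0, _, _, s, hs, p => by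
      show 1 ≤ s.card
      exact Finset.card_pos.2 hs
  | 1, _, _, s, hs, p => by
      show 1 ≤ p.1.parts.card
      refine Finset.card_pos.2 (p.1.parts_nonempty ?_)
      rw [bot_eq_empty]
      exact Finset.nonempty_iff_ne_empty.1 hs
  | m + 2, _, _, s, hs, p => by
      show 1 ≤ HyperPartition.outerBlocks (m + 1) p.2
      refine outer_pos (m + 1) ?_ p.2
      refine p.1.parts_nonempty ?_
      rw [bot_eq_empty]
      exact Finset.nonempty_iff_ne_empty.1 hs

lemma hyperStirling_zero_left {m n : ℕ} (hm : 1 ≤ m) (hn : 1 ≤ n) : hyperStirling m n 0 = 0 := by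
  rw [hyperStirling, Nat.card_eq_zero]
  left
  constructor
  rintro ⟨p, hp⟩
  have hne : (Finset.univ : Finset (Fin n)).Nonempty := by
    refine ⟨⟨0, by omega⟩, Finset.mem_univ _⟩
  have := outer_pos m hne p
  omega

lemma stirling_one {n : ℕ} (hn : 1 ≤ n) : stirling n 1 = 1 := by
  rw [stirling, Nat.card_eq_one_iff_unique]
  have huniv : (Finset.univ : Finset (Fin n)).Nonempty := ⟨⟨0, by omega⟩, Finset.mem_univ _⟩
  have hne : (Finset.univ : Finset (Fin n)) ≠ ⊥ := by
    rw [bot_eq_empty]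
    exact Finset.nonempty_iff_ne_empty.1 huniv
  constructor
  · constructor
    rintro ⟨P, hP⟩ ⟨Q, hQ⟩
    apply Subtype.ext
    have keyP := Finset.card_eq_one.1 hP
    have keyQ := Finset.card_eq_one.1 hQ
    obtain ⟨b, hb⟩ := keyP
    obtain ⟨c, hc⟩ := keyQ
    have hbu : b = Finset.univ := by
      have := P.sup_parts
      rw [hb] at this
      simpa using this
    have hcu : c = Finset.univ := by
      have := Q.sup_parts
      rw [hc] at this
      simpa using this
    show P = Q
    ext x
    rw [hb, hc, hbu, hcu]
  · exact ⟨⟨Finpartition.indiscrete hne, by simp [Finpartition.indiscrete]⟩⟩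

/-- Peeling the innermost partition: recurrence for hyper Stirling numbers. -/
lemma hyperStirling_rec {m : ℕ} (hm : 1 ≤ m) (n k : ℕ) :
    hyperStirling (m + 1) n k
      = ∑ j ∈ Finset.range (n + 1), stirling n j * hyperStirling m j k := by
  obtain ⟨m', rfl⟩ : ∃ m', m = m' + 1 := ⟨m - 1, by omega⟩
  rw [hyperStirling]
  have e : {p : HyperPartition (m' + 2) (Finset.univ : Finset (Fin n)) //
        HyperPartition.outerBlocks (m' + 2) p = k}
      ≃ (P : Finpartition (Finset.univ : Finset (Fin n)))
          × {q : HyperPartition (m' + 1) P.parts //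
              HyperPartition.outerBlocks (m' + 1) q = k} :=
    { toFun := fun z => ⟨z.1.1, ⟨z.1.2, z.2⟩⟩
      invFun := fun w => ⟨⟨w.1, w.2.1⟩, w.2.2⟩
      left_inv := fun z => rfl
      right_inv := fun w => rfl }
  rw [Nat.card_congr e, nat_card_sigma]
  have step1 : ∀ P : Finpartition (Finset.univ : Finset (Fin n)),
      Nat.card {q : HyperPartition (m' + 1) P.parts //
          HyperPartition.outerBlocks (m' + 1) q = k}
        = hyperStirling (m' + 1) P.parts.card k :=
    fun P => card_hp_outer (m' + 1) P.parts k
  rw [Finset.sum_congr rfl (fun P _ => step1 P)]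
  rw [← Finset.sum_fiberwise_of_maps_to
    (g := fun P : Finpartition (Finset.univ : Finset (Fin n)) => P.parts.card)
    (t := Finset.range (n + 1))
    (fun P _ => by
      show P.parts.card ∈ Finset.range (n + 1)
      have := P.card_parts_le_card
      rw [Finset.card_univ, Fintype.card_fin] at this
      exact Finset.mem_range.2 (by omega))]
  refine Finset.sum_congr rfl (fun j hj => ?_)
  rw [Finset.sum_congr rfl (fun P hP => by
      rw [(Finset.mem_filter.1 hP).2]), Finset.sum_const, smul_eq_mul]
  congr 1
  have hcf := card_finpartition (Finset.univ : Finset (Fin n)) j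
  rw [Nat.card_eq_fintype_card, Fintype.card_subtype, Finset.card_univ, Fintype.card_fin] at hcf
  exact hcf

/-- Peeling the innermost partition: recurrence for hyper Bell numbers. -/
lemma hyperBell_rec (m n : ℕ) :
    hyperBell (m + 1) n = ∑ j ∈ Finset.range (n + 1), stirling n j * hyperBell m j := by
  rw [hyperBell]
  rw [show (HyperPartition (m + 1) (Finset.univ : Finset (Fin n)))
    = ((P : Finpartition (Finset.univ : Finset (Fin n)))
        × HyperPartition m P.parts) from rfl]
  rw [nat_card_sigma]
  rw [Finset.sum_congr rfl (fun P _ => card_hp m P.parts)]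
  rw [← Finset.sum_fiberwise_of_maps_to
    (g := fun P : Finpartition (Finset.univ : Finset (Fin n)) => P.parts.card)
    (t := Finset.range (n + 1))
    (fun P _ => by
      show P.parts.card ∈ Finset.range (n + 1)
      have := P.card_parts_le_card
      rw [Finset.card_univ, Fintype.card_fin] at this
      exact Finset.mem_range.2 (by omega))]
  refine Finset.sum_congr rfl (fun j hj => ?_)
  rw [Finset.sum_congr rfl (fun P hP => by
      rw [(Finset.mem_filter.1 hP).2]), Finset.sum_const, smul_eq_mul]
  congr 1
  have hcf := card_finpartition (Finset.univ : Finset (Fin n)) j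
  rw [Nat.card_eq_fintype_card, Fintype.card_subtype, Finset.card_univ, Fintype.card_fin] at hcf
  exact hcf

end Counting
section Dagger

open Finset

/-- The key convolution identity, proven by double counting. -/
lemma dagger (n t i : ℕ) (hn : 1 ≤ n) :
    ∑ s ∈ Finset.range n, (n - 1).choose s * (stirling s t * stirling (n - s) i)
      = stirling n (t + i) * (t + i - 1).choose t := by
  set x₀ : Fin n := ⟨0, by omega⟩ with hx₀
  -- the type of pairs (P, T)
  set Zp : Finpartition (univ : Finset (Fin n)) × Finset (Finset (Fin n)) → Prop :=
    fun PT => PT.1.parts.card = t + i ∧ PT.2 ⊆ PT.1.parts ∧ PT.2.card = t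
      ∧ PT.1.part x₀ ∉ PT.2 with hZp
  -- Count 1 : fibered over P
  have count1 : Nat.card {z // Zp z} = stirling n (t + i) * (t + i - 1).choose t := by
    have e1 : {z // Zp z}
        ≃ (P : {P : Finpartition (univ : Finset (Fin n)) // P.parts.card = t + i})
            × {T // T ∈ (P.1.parts.erase (P.1.part x₀)).powersetCard t} :=
      { toFun := fun z => ⟨⟨z.1.1, z.2.1⟩, ⟨z.1.2, by
          rw [Finset.mem_powersetCard, Finset.subset_erase]
          exact ⟨⟨z.2.2.1, z.2.2.2.2⟩, z.2.2.2.1⟩⟩⟩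
        invFun := fun w => ⟨(w.1.1, w.2.1), by
          obtain ⟨hsub, hcard⟩ := Finset.mem_powersetCard.1 w.2.2
          obtain ⟨hsub', hnot⟩ := Finset.subset_erase.1 hsub
          exact ⟨w.1.2, hsub', hcard, hnot⟩⟩
        left_inv := fun z => rfl
        right_inv := fun w => rfl }
    rw [Nat.card_congr e1, nat_card_sigma]
    have hfib : ∀ P : {P : Finpartition (univ : Finset (Fin n)) // P.parts.card = t + i},
        Nat.card {T // T ∈ (P.1.parts.erase (P.1.part x₀)).powersetCard t}
          = (t + i - 1).choose t := by
      intro P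
      rw [Nat.card_eq_fintype_card, Fintype.card_coe, Finset.card_powersetCard,
        Finset.card_erase_of_mem (P.1.part_mem.2 (Finset.mem_univ x₀)), P.2]
    rw [Finset.sum_congr rfl (fun P _ => hfib P), Finset.sum_const, smul_eq_mul]
    congr 1
    rw [Finset.card_univ, ← Nat.card_eq_fintype_card, card_finpartition]
    congr 1
    rw [Finset.card_univ, Fintype.card_fin]
  -- Count 2 : fibered over A = T.sup id
  have count2 : Nat.card {z // Zp z}
      = ∑ s ∈ Finset.range n, (n - 1).choose s * (stirling s t * stirling (n - s) i) := by
    classical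
    rw [Nat.card_eq_fintype_card]
    rw [Finset.card_univ.symm]
    rw [Finset.card_eq_sum_card_fiberwise
      (f := fun z : {z // Zp z} => z.1.2.sup id)
      (t := ((univ : Finset (Fin n)).erase x₀).powerset)
      (fun z _ => by
        rw [Finset.mem_coe, Finset.mem_powerset]
        intro a ha
        rcases Finset.mem_sup.1 ha with ⟨b, hb, hab⟩
        have hbparts : b ∈ z.1.1.parts := z.2.2.1 hb
        refine Finset.mem_erase.2 ⟨?_, Finset.mem_univ a⟩
        rintro rfl
        exact z.2.2.2.2 ((z.1.1.part_eq_of_mem hbparts hab) ▸ hb))]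
    -- fiber count
    have hfiber : ∀ A ∈ ((univ : Finset (Fin n)).erase x₀).powerset,
        #(filter (fun z : {z // Zp z} => z.1.2.sup id = A) univ)
          = stirling A.card t * stirling (n - A.card) i := by
      intro A hA
      rw [Finset.mem_powerset] at hA
      have hx₀A : x₀ ∉ A := fun h => Finset.notMem_erase x₀ _ (hA h)
      have hdisj : Disjoint A ((univ : Finset (Fin n)) \ A) := Finset.disjoint_sdiff
      have hcover : A ∪ ((univ : Finset (Fin n)) \ A) = univ :=
        Finset.union_sdiff_of_subset (Finset.subset_univ A)
      have e2 : {z : {z // Zp z} // z.1.2.sup id = A}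
          ≃ {Q : Finpartition A // Q.parts.card = t}
            × {R : Finpartition ((univ : Finset (Fin n)) \ A) // R.parts.card = i} :=
      { toFun := fun z =>
          ⟨⟨z.1.1.1.ofSubset z.1.2.2.1 z.2, z.1.2.2.2.1⟩,
           ⟨z.1.1.1.ofSubset (Finset.sdiff_subset)
              (by rw [z.1.1.1.sup_sdiff_parts z.1.2.2.1, z.2]),
            by
              show (z.1.1.1.parts \ z.1.1.2).card = i
              rw [Finset.card_sdiff_of_subset z.1.2.2.1, z.1.2.1, z.1.2.2.2.1]
              omega⟩⟩
        invFun := fun w =>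
          ⟨⟨((w.1.1.disjUnion' w.2.1 hdisj).copy hcover, w.1.1.parts), by
            have hQR : Disjoint w.1.1.parts w.2.1.parts := by
              rw [Finset.disjoint_left]
              intro b hbQ hbR
              obtain ⟨a, ha⟩ := w.1.1.nonempty_of_mem_parts hbQ
              have h1 : a ∈ A := (w.1.1.le hbQ) ha
              have h2 : a ∈ (univ : Finset (Fin n)) \ A := (w.2.1.le hbR) ha
              exact (Finset.mem_sdiff.1 h2).2 h1
            have hparts : ((w.1.1.disjUnion' w.2.1 hdisj).copy hcover).parts
                = w.1.1.parts ∪ w.2.1.parts := rfl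
            refine ⟨?_, ?_, ?_, ?_⟩
            · rw [hparts, Finset.card_union_of_disjoint hQR, w.1.2, w.2.2]
            · rw [hparts]; exact Finset.subset_union_left
            · exact w.1.2
            · intro hmem
              have hx : x₀ ∈ ((w.1.1.disjUnion' w.2.1 hdisj).copy hcover).part x₀ :=
                Finpartition.mem_part _ (Finset.mem_univ x₀)
              have hsub := w.1.1.le hmem
              exact hx₀A (Finset.mem_of_subset hsub hx)⟩,
          w.1.1.sup_parts⟩
        left_inv := fun z => by
          apply Subtype.ext
          apply Subtype.ext
          apply Prod.ext
          · apply Finpartition.ext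
            show z.1.1.2 ∪ (z.1.1.1.parts \ z.1.1.2) = z.1.1.1.parts
            exact Finset.union_sdiff_of_subset z.1.2.2.1
          · rfl
        right_inv := fun w => by
          have hQR : Disjoint w.1.1.parts w.2.1.parts := by
            rw [Finset.disjoint_left]
            intro b hbQ hbR
            obtain ⟨a, ha⟩ := w.1.1.nonempty_of_mem_parts hbQ
            have h1 : a ∈ A := (w.1.1.le hbQ) ha
            have h2 : a ∈ (univ : Finset (Fin n)) \ A := (w.2.1.le hbR) ha
            exact (Finset.mem_sdiff.1 h2).2 h1
          apply Prod.ext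
          · apply Subtype.ext
            apply Finpartition.ext
            rfl
          · apply Subtype.ext
            apply Finpartition.ext
            show (w.1.1.parts ∪ w.2.1.parts) \ w.1.1.parts = w.2.1.parts
            exact Finset.union_sdiff_cancel_left hQR }
      rw [← Fintype.card_subtype, ← Nat.card_eq_fintype_card, Nat.card_congr e2,
        Nat.card_prod, card_finpartition, card_finpartition]
      congr 2
      rw [Finset.card_sdiff_of_subset (Finset.subset_univ A), Finset.card_univ, Fintype.card_fin]
    rw [Finset.sum_congr rfl hfiber]
    rw [Finset.sum_powerset]
    have hu : ((univ : Finset (Fin n)).erase x₀).card = n - 1 := by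
      rw [Finset.card_erase_of_mem (Finset.mem_univ x₀), Finset.card_univ, Fintype.card_fin]
    rw [hu, show n - 1 + 1 = n by omega]
    refine Finset.sum_congr rfl (fun j hj => ?_)
    have hconst : ∀ A ∈ Finset.powersetCard j ((univ : Finset (Fin n)).erase x₀),
        stirling A.card t * stirling (n - A.card) i = stirling j t * stirling (n - j) i := by
      intro A hA
      rw [(Finset.mem_powersetCard.1 hA).2]
    rw [Finset.sum_congr rfl hconst, Finset.sum_const, smul_eq_mul,
      Finset.card_powersetCard, hu]
  rw [← count2, count1]

end Dagger
section PS

open Finset PowerSeries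

lemma coeff_psComp (f g : PowerSeries ℚ) (n : ℕ) :
    coeff n (psComp f g)
      = ∑ i ∈ range (n + 1), coeff i f * coeff n (g ^ i) := by
  rw [psComp, coeff_mk, map_sum]
  exact Finset.sum_congr rfl (fun i _ => by rw [coeff_C_mul])

lemma coeff_pow_eq_zero {g : PowerSeries ℚ} (hg : constantCoeff g = 0)
    {n a : ℕ} (h : n < a) : coeff n (g ^ a) = 0 := by
  have hdvd : (X : PowerSeries ℚ) ^ a ∣ g ^ a :=
    pow_dvd_pow_of_dvd (X_dvd_iff.2 hg) a
  exact (X_pow_dvd_iff.1 hdvd) n h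

lemma psComp_one (g : PowerSeries ℚ) : psComp 1 g = 1 := by
  ext n
  rw [coeff_psComp]
  have : ∀ i ∈ range (n + 1), coeff i (1 : PowerSeries ℚ) * coeff n (g ^ i)
      = if i = 0 then coeff n (g ^ i) else 0 := by
    intro i _
    rw [coeff_one]
    split <;> simp
  rw [Finset.sum_congr rfl this, Finset.sum_ite_eq' (range (n + 1)) 0
    (fun i => coeff n (g ^ i))]
  simp

lemma psComp_sub_one (f g : PowerSeries ℚ) : psComp (f - 1) g = psComp f g - 1 := by
  have h1 : psComp (f - 1) g + psComp 1 g = psComp f g := by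
    ext n
    rw [map_add, coeff_psComp, coeff_psComp, coeff_psComp, ← Finset.sum_add_distrib]
    refine Finset.sum_congr rfl (fun i _ => ?_)
    rw [map_sub]
    ring
  rw [psComp_one] at h1
  exact eq_sub_of_add_eq h1

lemma psComp_mul {g : PowerSeries ℚ} (hg : constantCoeff g = 0) (f₁ f₂ : PowerSeries ℚ) :
    psComp (f₁ * f₂) g = psComp f₁ g * psComp f₂ g := by
  ext n
  have key : ∀ (f : PowerSeries ℚ) (m : ℕ), m ≤ n →
      coeff m (psComp f g) = ∑ i ∈ range (n + 1), coeff i f * coeff m (g ^ i) := by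
    intro f m hm
    rw [coeff_psComp]
    refine Finset.sum_subset (by intro x hx; simp only [Finset.mem_range] at hx ⊢; omega) ?_
    intro i _ hi
    simp only [Finset.mem_range, not_lt] at hi
    rw [coeff_pow_eq_zero hg (by omega), mul_zero]
  rw [coeff_mul]
  have hA : ∑ p ∈ Finset.HasAntidiagonal.antidiagonal n,
        coeff p.1 (psComp f₁ g) * coeff p.2 (psComp f₂ g)
      = ∑ i ∈ range (n + 1), ∑ j ∈ range (n + 1),
          coeff i f₁ * coeff j f₂ * coeff n (g ^ (i + j)) := by
    have h1 : ∀ p ∈ Finset.HasAntidiagonal.antidiagonal n,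
        coeff p.1 (psComp f₁ g) * coeff p.2 (psComp f₂ g)
          = ∑ i ∈ range (n + 1), ∑ j ∈ range (n + 1),
              coeff i f₁ * coeff j f₂ * (coeff p.1 (g ^ i) * coeff p.2 (g ^ j)) := by
      intro p hp
      have hpn := Finset.HasAntidiagonal.mem_antidiagonal.1 hp
      rw [key f₁ p.1 (by omega), key f₂ p.2 (by omega), Finset.sum_mul_sum]
      exact Finset.sum_congr rfl (fun i _ => Finset.sum_congr rfl (fun j _ => by ring))
    rw [Finset.sum_congr rfl h1, Finset.sum_comm]
    refine Finset.sum_congr rfl (fun i _ => ?_)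
    rw [Finset.sum_comm]
    refine Finset.sum_congr rfl (fun j _ => ?_)
    rw [← Finset.mul_sum, ← coeff_mul, ← pow_add]
  rw [hA, coeff_psComp]
  -- now expand the left side
  have h2 : ∀ q ∈ range (n + 1), coeff q (f₁ * f₂) * coeff n (g ^ q)
      = ∑ p ∈ Finset.HasAntidiagonal.antidiagonal q,
          coeff p.1 f₁ * coeff p.2 f₂ * coeff n (g ^ (p.1 + p.2)) := by
    intro q hq
    rw [coeff_mul, Finset.sum_mul]
    refine Finset.sum_congr rfl (fun p hp => ?_)
    rw [Finset.HasAntidiagonal.mem_antidiagonal.1 hp]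
  rw [Finset.sum_congr rfl h2]
  -- fiberwise decomposition of the rectangle
  have h3 : ∑ i ∈ range (n + 1), ∑ j ∈ range (n + 1),
        coeff i f₁ * coeff j f₂ * coeff n (g ^ (i + j))
      = ∑ p ∈ range (n + 1) ×ˢ range (n + 1),
          coeff p.1 f₁ * coeff p.2 f₂ * coeff n (g ^ (p.1 + p.2)) := by
    rw [Finset.sum_product]
  rw [h3]
  rw [← Finset.sum_fiberwise_of_maps_to
    (g := fun p : ℕ × ℕ => p.1 + p.2) (t := range (2 * n + 1))
    (fun p hp => by
      show p.1 + p.2 ∈ range (2 * n + 1)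
      simp only [Finset.mem_product, Finset.mem_range] at hp
      exact Finset.mem_range.2 (by omega))]
  rw [show range (2 * n + 1) = range (n + 1) ∪ (range (2 * n + 1) \ range (n + 1)) from
    (Finset.union_sdiff_of_subset (by intro x hx; simp at hx ⊢; omega)).symm]
  rw [Finset.sum_union (Finset.disjoint_sdiff)]
  have h4 : ∑ q ∈ range (2 * n + 1) \ range (n + 1),
      ∑ p ∈ Finset.filter (fun p : ℕ × ℕ => p.1 + p.2 = q) (range (n + 1) ×ˢ range (n + 1)),
        coeff p.1 f₁ * coeff p.2 f₂ * coeff n (g ^ (p.1 + p.2)) = 0 := by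
    refine Finset.sum_eq_zero (fun q hq => Finset.sum_eq_zero (fun p hp => ?_))
    simp only [Finset.mem_sdiff, Finset.mem_range, not_lt] at hq
    rw [(Finset.mem_filter.1 hp).2, coeff_pow_eq_zero hg (by omega), mul_zero]
  rw [h4, add_zero]
  refine (Finset.sum_congr rfl (fun q hq => ?_)).symm
  have hfil : Finset.filter (fun p : ℕ × ℕ => p.1 + p.2 = q) (range (n + 1) ×ˢ range (n + 1))
      = Finset.HasAntidiagonal.antidiagonal q := by
    ext p
    simp only [Finset.mem_filter, Finset.mem_product, Finset.mem_range,
      Finset.HasAntidiagonal.mem_antidiagonal]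
    simp only [Finset.mem_range] at hq
    omega
  rw [hfil]

lemma psComp_pow {h : PowerSeries ℚ} (hh : constantCoeff h = 0) (a : ℕ)
    (gs : PowerSeries ℚ) :
    psComp (gs ^ a) h = (psComp gs h) ^ a := by
  induction a with
  | zero => simpa using psComp_one h
  | succ a ih => rw [pow_succ, psComp_mul hh, ih, pow_succ]

lemma constantCoeff_psComp {g : PowerSeries ℚ} (hg : constantCoeff g = 0)
    (f : PowerSeries ℚ) :
    constantCoeff (psComp f g) = coeff 0 f := by
  rw [← coeff_zero_eq_constantCoeff_apply, coeff_psComp]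
  simp

lemma psComp_assoc {g h : PowerSeries ℚ} (hg : constantCoeff g = 0)
    (hh : constantCoeff h = 0) (f : PowerSeries ℚ) :
    psComp (psComp f g) h = psComp f (psComp g h) := by
  have hgh : constantCoeff (psComp g h) = 0 := by
    rw [constantCoeff_psComp hh, coeff_zero_eq_constantCoeff_apply, hg]
  ext n
  rw [coeff_psComp, coeff_psComp]
  have h1 : ∀ a ∈ range (n + 1),
      coeff a f * coeff n ((psComp g h) ^ a)
        = ∑ i ∈ range (n + 1), coeff a f * (coeff i (g ^ a) * coeff n (h ^ i)) := by
    intro a _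
    rw [← psComp_pow hh, coeff_psComp, Finset.mul_sum]
  rw [Finset.sum_congr rfl h1, Finset.sum_comm]
  refine Finset.sum_congr rfl (fun i hi => ?_)
  rw [coeff_psComp, Finset.sum_mul]
  refine (Finset.sum_subset (Finset.range_subset_range.2
      (by simp only [Finset.mem_range] at hi; omega)) ?_).trans
    (Finset.sum_congr rfl (fun a _ => by ring))
  intro a _ ha
  simp only [Finset.mem_range, not_lt] at ha
  rw [coeff_pow_eq_zero hg (by omega)]
  ring

lemma constantCoeff_E (m : ℕ) : constantCoeff (E m) = 1 := by
  induction m with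
  | zero =>
      show constantCoeff (exp ℚ) = 1
      rw [← coeff_zero_eq_constantCoeff_apply, coeff_exp]
      simp
  | succ m ih =>
      show constantCoeff (psComp (exp ℚ) (E m - 1)) = 1
      have hsub : constantCoeff (E m - 1) = 0 := by
        rw [map_sub, ih]; simp
      rw [constantCoeff_psComp hsub, coeff_exp]
      simp

lemma E_comp (m : ℕ) : E (m + 1) = psComp (E m) (exp ℚ - 1) := by
  have hexp1 : constantCoeff (exp ℚ - 1) = 0 := by
    rw [map_sub, ← coeff_zero_eq_constantCoeff_apply, coeff_exp]
    simp
  induction m with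
  | zero => rfl
  | succ m ih =>
      have hEm1 : constantCoeff (E m - 1) = 0 := by
        rw [map_sub, constantCoeff_E]; simp
      show psComp (exp ℚ) (E (m + 1) - 1) = psComp (E (m + 1)) (exp ℚ - 1)
      calc psComp (exp ℚ) (E (m + 1) - 1)
          = psComp (exp ℚ) (psComp (E m) (exp ℚ - 1) - 1) := by rw [← ih]
        _ = psComp (exp ℚ) (psComp (E m - 1) (exp ℚ - 1)) := by rw [psComp_sub_one]
        _ = psComp (psComp (exp ℚ) (E m - 1)) (exp ℚ - 1) :=
            (psComp_assoc hEm1 hexp1 (exp ℚ)).symm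
        _ = psComp (E (m + 1)) (exp ℚ - 1) := rfl
section FnCount

open Finset

variable {n l : ℕ}

noncomputable instance kerDec (f : Fin n → Fin l) : DecidableRel ⇑(Setoid.ker f) :=
  fun _ _ => Classical.dec _

/-- The kernel partition of a function. -/
noncomputable def kerPart (f : Fin n → Fin l) : Finpartition (univ : Finset (Fin n)) :=
  Finpartition.ofSetoid (Setoid.ker f)

lemma mem_kerPart (f : Fin n → Fin l) (x y : Fin n) :
    y ∈ (kerPart f).part x ↔ f x = f y := by
  rw [kerPart, Finpartition.mem_part_ofSetoid_iff_rel]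
  exact Setoid.ker_def

/-- Encode a function as a partition with an embedding of its parts. -/
noncomputable def funToSigma (f : Fin n → Fin l) :
    Σ P : Finpartition (univ : Finset (Fin n)), {x // x ∈ P.parts} ↪ Fin l :=
  ⟨kerPart f,
   ⟨fun b => f (b.1.min' (Finpartition.nonempty_of_mem_parts _ b.2)), by
      rintro ⟨b, hb⟩ ⟨c, hc⟩ h
      simp only at h
      set xb := b.min' (Finpartition.nonempty_of_mem_parts _ hb) with hxb
      set xc := c.min' (Finpartition.nonempty_of_mem_parts _ hc) with hxc
      have hxbb : xb ∈ b := b.min'_mem _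
      have hxcc : xc ∈ c := c.min'_mem _
      have h1 : xc ∈ (kerPart f).part xb := (mem_kerPart f xb xc).2 h
      have h2 : (kerPart f).part xb = b := (kerPart f).part_eq_of_mem hb hxbb
      rw [h2] at h1
      exact Subtype.ext ((kerPart f).eq_of_mem_parts hb hc h1 hxcc)⟩⟩

noncomputable def sigmaToFun
    (w : Σ P : Finpartition (univ : Finset (Fin n)), {x // x ∈ P.parts} ↪ Fin l) :
    Fin n → Fin l :=
  fun x => w.2 ⟨w.1.part x, w.1.part_mem.2 (Finset.mem_univ x)⟩

lemma sigmaToFun_funToSigma (f : Fin n → Fin l) : sigmaToFun (funToSigma f) = f := by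
  funext x
  show f (((kerPart f).part x).min' _) = f x
  refine ((mem_kerPart f x _).1 ?_).symm
  exact Finset.min'_mem _ _

lemma sigmaEmbExt {P P' : Finpartition (univ : Finset (Fin n))}
    {e : {x // x ∈ P.parts} ↪ Fin l} {e' : {x // x ∈ P'.parts} ↪ Fin l}
    (h : P = P')
    (h2 : ∀ b (hb : b ∈ P.parts) (hb' : b ∈ P'.parts), e ⟨b, hb⟩ = e' ⟨b, hb'⟩) :
    (⟨P, e⟩ : Σ Q : Finpartition (univ : Finset (Fin n)), {x // x ∈ Q.parts} ↪ Fin l)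
      = ⟨P', e'⟩ := by
  subst h
  exact congrArg (Sigma.mk P) (Function.Embedding.ext (fun b => h2 b.1 b.2 b.2))

lemma funToSigma_sigmaToFun
    (w : Σ P : Finpartition (univ : Finset (Fin n)), {x // x ∈ P.parts} ↪ Fin l) :
    funToSigma (sigmaToFun w) = w := by
  obtain ⟨P, e⟩ := w
  set f := sigmaToFun ⟨P, e⟩ with hf
  have partEq : ∀ x, (kerPart f).part x = P.part x := by
    intro x
    ext y
    rw [mem_kerPart]
    have hfy : ∀ z, f z = e ⟨P.part z, P.part_mem.2 (Finset.mem_univ z)⟩ := fun z => rfl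
    rw [hfy x, hfy y]
    constructor
    · intro h
      have := e.injective h
      have hparts : P.part x = P.part y := congrArg Subtype.val this
      exact (P.mem_part_iff_part_eq_part (Finset.mem_univ y) (Finset.mem_univ x)).2
        hparts.symm
    · intro h
      have hparts : P.part y = P.part x :=
        (P.mem_part_iff_part_eq_part (Finset.mem_univ y) (Finset.mem_univ x)).1 h
      exact congrArg e (Subtype.ext hparts.symm)
  have hP : kerPart f = P := by
    apply Finpartition.ext
    ext b
    constructor
    · intro hb
      obtain ⟨x, hx⟩ := (kerPart f).nonempty_of_mem_parts hb
      have : (kerPart f).part x = b := (kerPart f).part_eq_of_mem hb hx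
      rw [← this, partEq]
      exact P.part_mem.2 (Finset.mem_univ x)
    · intro hb
      obtain ⟨x, hx⟩ := P.nonempty_of_mem_parts hb
      have : P.part x = b := P.part_eq_of_mem hb hx
      rw [← this, ← partEq]
      exact (kerPart f).part_mem.2 (Finset.mem_univ x)
  refine sigmaEmbExt hP ?_
  intro b hb hb'
  show f (b.min' _) = e ⟨b, hb'⟩
  have hmin : b.min' (Finpartition.nonempty_of_mem_parts _ hb) ∈ b := Finset.min'_mem _ _
  have hpart : P.part (b.min' (Finpartition.nonempty_of_mem_parts _ hb)) = b :=
    P.part_eq_of_mem hb' hmin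
  show e ⟨P.part _, _⟩ = e ⟨b, hb'⟩
  exact congrArg e (Subtype.ext hpart)

/-- Counting functions by kernel partitions. -/
lemma pow_count (l n : ℕ) :
    l ^ n = ∑ j ∈ range (n + 1), stirling n j * (j.factorial * l.choose j) := by
  classical
  have hbij : Function.Bijective (@funToSigma n l) := by
    constructor
    · intro f g h
      rw [← sigmaToFun_funToSigma f, ← sigmaToFun_funToSigma g, h]
    · intro w
      exact ⟨sigmaToFun w, funToSigma_sigmaToFun w⟩
  have hcard := Fintype.card_of_bijective hbij
  rw [Fintype.card_fun, Fintype.card_fin, Fintype.card_fin, Fintype.card_sigma] at hcard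
  rw [hcard]
  have hemb : ∀ P : Finpartition (univ : Finset (Fin n)),
      Fintype.card ({x // x ∈ P.parts} ↪ Fin l) = l.descFactorial P.parts.card := by
    intro P
    rw [Fintype.card_embedding_eq, Fintype.card_coe, Fintype.card_fin]
  rw [Finset.sum_congr rfl (fun P _ => hemb P)]
  rw [← Finset.sum_fiberwise_of_maps_to
    (g := fun P : Finpartition (univ : Finset (Fin n)) => P.parts.card)
    (t := Finset.range (n + 1))
    (fun P _ => by
      show P.parts.card ∈ Finset.range (n + 1)
      have := P.card_parts_le_card
      rw [Finset.card_univ, Fintype.card_fin] at this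
      exact Finset.mem_range.2 (by omega))]
  refine Finset.sum_congr rfl (fun j hj => ?_)
  rw [Finset.sum_congr rfl (fun P hP => by
      rw [(Finset.mem_filter.1 hP).2]), Finset.sum_const, smul_eq_mul]
  rw [Nat.descFactorial_eq_factorial_mul_choose]
  congr 1
  have hcf := card_finpartition (Finset.univ : Finset (Fin n)) j
  rw [Nat.card_eq_fintype_card, Fintype.card_subtype, Finset.card_univ, Fintype.card_fin] at hcf
  exact hcf

end FnCount
section BellSide

open Finset PowerSeries

lemma neg_one_pow_sub {d r : ℕ} (h : r ≤ d) :
    ((-1 : ℚ)) ^ (d - r) = (-1) ^ d * (-1) ^ r := by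
  have h2 : ((-1 : ℚ)) ^ r * (-1) ^ r = 1 := by
    rw [← pow_add, ← two_mul, pow_mul]
    norm_num
  calc ((-1 : ℚ)) ^ (d - r) = (-1) ^ (d - r) * ((-1) ^ r * (-1) ^ r) := by rw [h2, mul_one]
    _ = ((-1 : ℚ)) ^ (d - r) * (-1) ^ r * (-1) ^ r := by ring
    _ = ((-1 : ℚ)) ^ (d - r + r) * (-1) ^ r := by rw [pow_add]
    _ = ((-1 : ℚ)) ^ d * (-1) ^ r := by rw [Nat.sub_add_cancel h]

lemma alternating_sum_choose_rat (d : ℕ) :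
    ∑ r ∈ range (d + 1), ((-1 : ℚ)) ^ r * (d.choose r) = if d = 0 then 1 else 0 := by
  have h := Int.alternating_sum_range_choose (n := d)
  have h2 : ((∑ m ∈ range (d + 1), ((-1 : ℤ)) ^ m * (d.choose m) : ℤ) : ℚ)
      = ((if d = 0 then (1 : ℤ) else 0 : ℤ) : ℚ) := congrArg (fun z : ℤ => (z : ℚ)) h
  push_cast at h2
  rw [h2]

lemma ortho (j j' : ℕ) :
    ∑ l ∈ range (j + 1), ((-1 : ℚ)) ^ (j - l) * (j.choose l) * (l.choose j')
      = if j' = j then 1 else 0 := by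
  by_cases hj : j < j'
  · rw [Finset.sum_eq_zero, if_neg (by omega)]
    intro l hl
    rw [Finset.mem_range] at hl
    rw [Nat.choose_eq_zero_of_lt (show l < j' by omega)]
    simp
  · push_neg at hj
    set d := j - j' with hd
    have hterm : ∀ l ∈ range (j + 1),
        ((-1 : ℚ)) ^ (j - l) * (j.choose l) * (l.choose j')
          = if j' ≤ l then ((-1 : ℚ)) ^ (j - l) * (j.choose j') * ((j - j').choose (l - j'))
            else 0 := by
      intro l hl
      rw [Finset.mem_range] at hl
      by_cases hle : j' ≤ l
      · rw [if_pos hle]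
        have hcm := Nat.choose_mul (n := j) (k := l) (s := j') hle
        have : ((j.choose l : ℚ)) * (l.choose j' : ℚ)
            = ((j.choose j' : ℚ)) * ((j - j').choose (l - j') : ℚ) := by exact_mod_cast hcm
        calc ((-1 : ℚ)) ^ (j - l) * (j.choose l) * (l.choose j')
            = ((-1 : ℚ)) ^ (j - l) * ((j.choose l : ℚ) * (l.choose j' : ℚ)) := by ring
          _ = ((-1 : ℚ)) ^ (j - l) * ((j.choose j' : ℚ) * ((j - j').choose (l - j') : ℚ)) := by
              rw [this]
          _ = ((-1 : ℚ)) ^ (j - l) * (j.choose j') * ((j - j').choose (l - j')) := by ring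
      · rw [if_neg hle, Nat.choose_eq_zero_of_lt (show l < j' by omega)]
        simp
    rw [Finset.sum_congr rfl hterm, ← Finset.sum_filter]
    have hfil : Finset.filter (fun l => j' ≤ l) (range (j + 1)) = Finset.Ico j' (j + 1) := by
      ext l
      simp only [Finset.mem_filter, Finset.mem_range, Finset.mem_Ico]
      omega
    rw [hfil, Finset.sum_Ico_eq_sum_range]
    have hrange : j + 1 - j' = d + 1 := by omega
    rw [hrange]
    have hsummand : ∀ r ∈ range (d + 1),
        ((-1 : ℚ)) ^ (j - (j' + r)) * (j.choose j') * ((j - j').choose (j' + r - j'))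
          = (j.choose j' : ℚ) * ((-1) ^ d * ((-1 : ℚ)) ^ r * (d.choose r)) := by
      intro r hr
      rw [Finset.mem_range] at hr
      have h1 : j - (j' + r) = d - r := by omega
      have h2 : j' + r - j' = r := by omega
      rw [h1, h2, neg_one_pow_sub (by omega)]
      ring
    rw [Finset.sum_congr rfl hsummand, ← Finset.mul_sum]
    have : ∑ r ∈ range (d + 1), ((-1 : ℚ)) ^ d * ((-1 : ℚ)) ^ r * (d.choose r)
        = (-1 : ℚ) ^ d * ∑ r ∈ range (d + 1), ((-1 : ℚ)) ^ r * (d.choose r) := by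
      rw [Finset.mul_sum]
      exact Finset.sum_congr rfl (fun r _ => by ring)
    rw [this, alternating_sum_choose_rat]
    by_cases hjj : j' = j
    · have hd0 : d = 0 := by omega
      rw [hd0, if_pos rfl, if_pos hjj, hjj]
      simp [Nat.choose_self]
    · have hd0 : ¬ (d = 0) := by omega
      rw [if_neg hd0, if_neg hjj]
      simp

/-- The coefficient formula: `n! [xⁿ] (eˣ-1)^j = j! S(n,j)`. -/
lemma stirling_coeff (j n : ℕ) :
    (n.factorial : ℚ) * coeff n ((exp ℚ - 1) ^ j)
      = (j.factorial : ℚ) * stirling n j := by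
  have hexpand : (exp ℚ - 1 : PowerSeries ℚ) ^ j
      = ∑ l ∈ range (j + 1), (exp ℚ) ^ l * (-1 : PowerSeries ℚ) ^ (j - l) * (j.choose l : PowerSeries ℚ) := by
    rw [sub_eq_add_neg, add_pow]
  have hcoeff : ∀ l, coeff n ((exp ℚ) ^ l * (-1 : PowerSeries ℚ) ^ (j - l) * (j.choose l : PowerSeries ℚ))
      = (l : ℚ) ^ n * (1 / n.factorial) * ((-1 : ℚ) ^ (j - l) * (j.choose l : ℚ)) := by
    intro l
    have hC : ((-1 : PowerSeries ℚ)) ^ (j - l) * (j.choose l : PowerSeries ℚ)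
        = C ((-1 : ℚ) ^ (j - l) * (j.choose l : ℚ)) := by
      rw [map_mul]
      congr 1 <;> simp
    rw [mul_assoc, hC, coeff_mul_C, exp_pow_eq_rescale_exp, coeff_rescale, coeff_exp]
    simp [algebraMap]
  rw [hexpand, map_sum, Finset.sum_congr rfl (fun l _ => hcoeff l), Finset.mul_sum]
  have hfac : (n.factorial : ℚ) ≠ 0 := Nat.cast_ne_zero.2 (Nat.factorial_ne_zero n)
  have hstep1 : ∀ l ∈ range (j + 1),
      (n.factorial : ℚ) * ((l : ℚ) ^ n * (1 / n.factorial) * ((-1 : ℚ) ^ (j - l) * (j.choose l : ℚ)))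
        = (l : ℚ) ^ n * ((-1 : ℚ) ^ (j - l) * (j.choose l : ℚ)) := by
    intro l _
    field_simp
  rw [Finset.sum_congr rfl hstep1]
  -- substitute the count of functions
  have hpow : ∀ l : ℕ, ((l : ℚ)) ^ n
      = ∑ j' ∈ range (n + 1), (stirling n j' : ℚ) * ((j'.factorial : ℚ) * (l.choose j' : ℚ)) := by
    intro l
    have hpc := pow_count l n
    have hc : ((l ^ n : ℕ) : ℚ) = ((∑ j' ∈ range (n + 1),
        stirling n j' * (j'.factorial * l.choose j') : ℕ) : ℚ) :=
      congrArg (fun z : ℕ => (z : ℚ)) hpc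
    push_cast at hc
    exact hc
  calc ∑ l ∈ range (j + 1), (l : ℚ) ^ n * ((-1 : ℚ) ^ (j - l) * (j.choose l : ℚ))
      = ∑ l ∈ range (j + 1), ∑ j' ∈ range (n + 1),
          (stirling n j' : ℚ) * (j'.factorial : ℚ)
            * (((-1 : ℚ)) ^ (j - l) * (j.choose l : ℚ) * (l.choose j' : ℚ)) := by
        refine Finset.sum_congr rfl (fun l _ => ?_)
        rw [hpow l, Finset.sum_mul]
        exact Finset.sum_congr rfl (fun j' _ => by ring)
    _ = ∑ j' ∈ range (n + 1), (stirling n j' : ℚ) * (j'.factorial : ℚ)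
          * ∑ l ∈ range (j + 1),
              ((-1 : ℚ)) ^ (j - l) * (j.choose l : ℚ) * (l.choose j' : ℚ) := by
        rw [Finset.sum_comm]
        exact Finset.sum_congr rfl (fun j' _ => by rw [Finset.mul_sum])
    _ = ∑ j' ∈ range (n + 1), (stirling n j' : ℚ) * (j'.factorial : ℚ)
          * (if j' = j then 1 else 0) := by
        refine Finset.sum_congr rfl (fun j' _ => ?_)
        rw [ortho j j']
    _ = (j.factorial : ℚ) * stirling n j := by
        rw [Finset.sum_congr rfl (fun j' _ => by
          rw [mul_ite, mul_one, mul_zero])]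
        rw [Finset.sum_ite_eq' (range (n + 1)) j
          (fun j' => (stirling n j' : ℚ) * (j'.factorial : ℚ))]
        by_cases hjn : j ∈ range (n + 1)
        · rw [if_pos hjn]; ring
        · rw [if_neg hjn]
          rw [Finset.mem_range] at hjn
          rw [stirling_eq_zero (by omega)]
          simp

lemma bell_zero (n : ℕ) : bell 0 n = 1 := by
  rw [bell]
  show (n.factorial : ℚ) * coeff n (exp ℚ) = 1
  rw [coeff_exp]
  have hfac : (n.factorial : ℚ) ≠ 0 := Nat.cast_ne_zero.2 (Nat.factorial_ne_zero n)
  rw [show (algebraMap ℚ ℚ) ((1 : ℚ) / n.factorial) = 1 / (n.factorial : ℚ) from rfl]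
  field_simp

lemma bell_rec (m n : ℕ) :
    bell (m + 1) n = ∑ j ∈ range (n + 1), (stirling n j : ℚ) * bell m j := by
  rw [bell, E_comp, coeff_psComp, Finset.mul_sum]
  refine Finset.sum_congr rfl (fun j hj => ?_)
  rw [bell]
  have := stirling_coeff j n
  calc (n.factorial : ℚ) * (coeff j (E m) * coeff n ((exp ℚ - 1) ^ j))
      = ((n.factorial : ℚ) * coeff n ((exp ℚ - 1) ^ j)) * coeff j (E m) := by ring
    _ = ((j.factorial : ℚ) * stirling n j) * coeff j (E m) := by rw [this]
    _ = (stirling n j : ℚ) * ((j.factorial : ℚ) * coeff j (E m)) := by ring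

/-- The analytic Bell numbers count hyper partitions. -/
lemma bell_eq_hyperBell (m n : ℕ) : bell m n = (hyperBell m n : ℚ) := by
  induction m generalizing n with
  | zero => rw [bell_zero, hyperBell_zero]; simp
  | succ m ih =>
      rw [bell_rec, hyperBell_rec]
      push_cast
      exact Finset.sum_congr rfl (fun j _ => by rw [ih j])

end BellSide


open Finset

/-- The main recurrence, in ℕ. -/
theorem main_nat : ∀ m, 1 ≤ m → ∀ n k, 1 ≤ k → k ≤ n →
    hyperStirling m n k
      = ∑ s ∈ Finset.Icc (k - 1) (n - 1),
          (n - 1).choose s * hyperBell (m - 1) (n - s) * hyperStirling m s (k - 1) := by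
  intro m
  induction m with
  | zero => intro h; omega
  | succ m ih =>
    intro _ n k hk hkn
    have hn : 1 ≤ n := le_trans hk hkn
    simp only [Nat.add_sub_cancel]
    rcases Nat.eq_zero_or_pos m with rfl | hm
    · -- base case : order 1
      simp only [show (0 : ℕ) + 1 = 1 from rfl, hyperBell_zero, mul_one, hyperStirling_one]
      have hdag := dagger n (k - 1) 1 hn
      rw [show k - 1 + 1 = k by omega, Nat.choose_self, mul_one] at hdag
      have hsub : Finset.Icc (k - 1) (n - 1) ⊆ Finset.range n := by
        intro s hs
        rw [Finset.mem_Icc] at hs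
        rw [Finset.mem_range]
        omega
      have hzero : ∀ s ∈ Finset.range n, s ∉ Finset.Icc (k - 1) (n - 1) →
          (n - 1).choose s * (stirling s (k - 1) * stirling (n - s) 1) = 0 := by
        intro s hs hns
        rw [Finset.mem_range] at hs
        rw [Finset.mem_Icc, not_and_or] at hns
        have hlt : s < k - 1 := by omega
        rw [stirling_eq_zero hlt]
        ring
      rw [← Finset.sum_subset hsub hzero] at hdag
      rw [← hdag]
      refine Finset.sum_congr rfl (fun s hs => ?_)
      rw [Finset.mem_Icc] at hs
      rw [stirling_one (show 1 ≤ n - s by omega)]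
      ring
    · -- inductive step : m ≥ 1
      obtain ⟨m', rfl⟩ : ∃ m', m = m' + 1 := ⟨m - 1, by omega⟩
      have hm1 : 1 ≤ m' + 1 := by omega
      have hrec := hyperStirling_rec hm1 n k
      have hL2 : ∀ j ∈ range (n + 1),
          stirling n j * hyperStirling (m' + 1) j k
            = ∑ t ∈ range (n + 1), stirling n j *
                ((j - 1).choose t * hyperBell m' (j - t) * hyperStirling (m' + 1) t (k - 1)) := by
        intro j hj
        rw [Finset.mem_range] at hj
        rcases Nat.eq_zero_or_pos j with rfl | hj1
        · rw [stirling_zero hn]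
          simp
        · by_cases hjk : j < k
          · rw [hyperStirling_eq_zero hjk, mul_zero]
            refine (Finset.sum_eq_zero (fun t ht => ?_)).symm
            by_cases htk : t < k - 1
            · rw [hyperStirling_eq_zero htk]; ring
            · rw [Nat.choose_eq_zero_of_lt (show j - 1 < t by omega)]; ring
          · push_neg at hjk
            have hIH := ih hm j k hk hjk
            simp only [Nat.add_sub_cancel] at hIH
            have hsub2 : Finset.Icc (k - 1) (j - 1) ⊆ Finset.range (n + 1) := by
              intro t ht
              rw [Finset.mem_Icc] at ht
              rw [Finset.mem_range]
              omega
            have hzero2 : ∀ t ∈ Finset.range (n + 1), t ∉ Finset.Icc (k - 1) (j - 1) →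
                (j - 1).choose t * hyperBell m' (j - t) * hyperStirling (m' + 1) t (k - 1)
                  = 0 := by
              intro t _ hnt
              rw [Finset.mem_Icc, not_and_or] at hnt
              by_cases htk : t < k - 1
              · rw [hyperStirling_eq_zero htk]; ring
              · rw [Nat.choose_eq_zero_of_lt (show j - 1 < t by omega)]; ring
            rw [hIH, Finset.sum_subset hsub2 hzero2, Finset.mul_sum]
      rw [Finset.sum_congr rfl hL2, Finset.sum_comm] at hrec
      have hL3 : ∀ t ∈ range (n + 1),
          ∑ j ∈ range (n + 1), stirling n j *
              ((j - 1).choose t * hyperBell m' (j - t) * hyperStirling (m' + 1) t (k - 1))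
            = ∑ i ∈ range (n + 1), stirling n (t + i) *
                ((t + i - 1).choose t * hyperBell m' i * hyperStirling (m' + 1) t (k - 1)) := by
        intro t ht
        rw [Finset.mem_range] at ht
        have hsub3 : Finset.Icc t n ⊆ Finset.range (n + 1) := by
          intro j hj
          rw [Finset.mem_Icc] at hj
          rw [Finset.mem_range]
          omega
        have hzero3 : ∀ j ∈ Finset.range (n + 1), j ∉ Finset.Icc t n →
            stirling n j * ((j - 1).choose t * hyperBell m' (j - t)
              * hyperStirling (m' + 1) t (k - 1)) = 0 := by
          intro j hj hnj
          rw [Finset.mem_range] at hj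
          rw [Finset.mem_Icc, not_and_or] at hnj
          have hjt : j < t := by omega
          rw [Nat.choose_eq_zero_of_lt (show j - 1 < t by omega)]
          ring
        rw [← Finset.sum_subset hsub3 hzero3]
        rw [show Finset.Icc t n = Finset.Ico t (n + 1) from (Finset.Ico_add_one_right_eq_Icc t n).symm]
        rw [Finset.sum_Ico_eq_sum_range]
        have hre : ∀ r ∈ Finset.range (n + 1 - t),
            stirling n (t + r) * ((t + r - 1).choose t * hyperBell m' (t + r - t)
              * hyperStirling (m' + 1) t (k - 1))
            = stirling n (t + r) * ((t + r - 1).choose t * hyperBell m' r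
              * hyperStirling (m' + 1) t (k - 1)) := by
          intro r _
          rw [show t + r - t = r by omega]
        rw [Finset.sum_congr rfl hre]
        refine Finset.sum_subset ?_ ?_
        · intro r hr
          rw [Finset.mem_range] at hr ⊢
          omega
        · intro r _ hr
          rw [Finset.mem_range, not_lt] at hr
          rw [stirling_eq_zero (show n < t + r by omega)]
          ring
      rw [Finset.sum_congr rfl hL3] at hrec
      -- transform the right-hand side into the same double sum
      have hRHS : ∑ s ∈ Finset.Icc (k - 1) (n - 1),
            (n - 1).choose s * hyperBell (m' + 1) (n - s) * hyperStirling (m' + 1 + 1) s (k - 1)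
          = ∑ t ∈ range (n + 1), ∑ i ∈ range (n + 1), stirling n (t + i) *
              ((t + i - 1).choose t * hyperBell m' i * hyperStirling (m' + 1) t (k - 1)) := by
        have hexpand : ∀ s ∈ Finset.Icc (k - 1) (n - 1),
            (n - 1).choose s * hyperBell (m' + 1) (n - s) * hyperStirling (m' + 1 + 1) s (k - 1)
              = ∑ t ∈ range (n + 1), ∑ i ∈ range (n + 1),
                  (n - 1).choose s * (stirling s t * stirling (n - s) i)
                    * (hyperBell m' i * hyperStirling (m' + 1) t (k - 1)) := by
          intro s hs
          rw [Finset.mem_Icc] at hs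
          have hBexp : hyperBell (m' + 1) (n - s)
              = ∑ i ∈ range (n + 1), stirling (n - s) i * hyperBell m' i := by
            rw [hyperBell_rec m' (n - s)]
            refine Finset.sum_subset ?_ ?_
            · intro i hi
              rw [Finset.mem_range] at hi ⊢
              omega
            · intro i _ hi
              rw [Finset.mem_range, not_lt] at hi
              rw [stirling_eq_zero (show n - s < i by omega)]
              ring
          have hSexp : hyperStirling (m' + 1 + 1) s (k - 1)
              = ∑ t ∈ range (n + 1), stirling s t * hyperStirling (m' + 1) t (k - 1) := by
            rw [hyperStirling_rec hm1 s (k - 1)]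
            refine Finset.sum_subset ?_ ?_
            · intro t htt
              rw [Finset.mem_range] at htt ⊢
              omega
            · intro t _ htt
              rw [Finset.mem_range, not_lt] at htt
              rw [stirling_eq_zero (show s < t by omega)]
              ring
          rw [hBexp, hSexp, Finset.mul_sum]
          refine Finset.sum_congr rfl (fun t _ => ?_)
          rw [Finset.mul_sum, Finset.sum_mul]
          exact Finset.sum_congr rfl (fun i _ => by ring)
        rw [Finset.sum_congr rfl hexpand]
        have hsub4 : Finset.Icc (k - 1) (n - 1) ⊆ Finset.range n := by
          intro s hs
          rw [Finset.mem_Icc] at hs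
          rw [Finset.mem_range]
          omega
        have hzero4 : ∀ s ∈ Finset.range n, s ∉ Finset.Icc (k - 1) (n - 1) →
            ∑ t ∈ range (n + 1), ∑ i ∈ range (n + 1),
                (n - 1).choose s * (stirling s t * stirling (n - s) i)
                  * (hyperBell m' i * hyperStirling (m' + 1) t (k - 1)) = 0 := by
          intro s hs hns
          rw [Finset.mem_range] at hs
          rw [Finset.mem_Icc, not_and_or] at hns
          have hsk : s < k - 1 := by omega
          refine Finset.sum_eq_zero (fun t _ => Finset.sum_eq_zero (fun i _ => ?_))
          by_cases htk : t < k - 1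
          · rw [hyperStirling_eq_zero htk]; ring
          · rw [stirling_eq_zero (show s < t by omega)]; ring
        rw [Finset.sum_subset hsub4 hzero4, Finset.sum_comm]
        refine Finset.sum_congr rfl (fun t _ => ?_)
        rw [Finset.sum_comm]
        refine Finset.sum_congr rfl (fun i _ => ?_)
        rw [← Finset.sum_mul, dagger n t i hn]
        ring
      exact hrec.trans hRHS.symm
/-- `S^(m)(n,k) = Σ_{s=k−1}^{n−1} C(n−1,s) · B_{n−s}^(m−1) · S^(m)(s,k−1)`
for `m ≥ 1`, `n ≥ k ≥ 1` (the conventions `S^(m)(0,0) = 1` and `B_j^(0) = 1` hold by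
definition of `hyperStirling` and `bell`). -/
theorem stmt10 (m n k : ℕ) (hm : 1 ≤ m) (hk : 1 ≤ k) (hkn : k ≤ n) :
    (hyperStirling m n k : ℚ) =
      ∑ s ∈ Finset.Icc (k - 1) (n - 1),
        ((n - 1).choose s : ℚ) * bell (m - 1) (n - s) * (hyperStirling m s (k - 1) : ℚ) := by
  rw [main_nat m hm n k hk hkn]
  push_cast
  refine Finset.sum_congr rfl (fun s _ => ?_)
  rw [bell_eq_hyperBell]
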